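/- For every symmetric bilinear form Ric on V, every vector v ∈ V, and all real numbers λ and m with m ≠ 0, the contraction of the D-tensor against the tensor Ric − (1/m) v♭⊗v♭ − λ g in the first and third slots, with v inserted in the second slot, satisfies Σ_{i,j=1}^n D(e_i, v, e_j)·(Ric(e_i,e_j) − (1/m)⟨v,e_i⟩⟨v,e_j⟩ − λ⟨e_i,e_j⟩) = −((n−2)/2)·|D|². In particular this contraction is nonpositive, and it vanishes if and only if D = 0. -/

import Mathlib

open scoped InnerProductSpace

namespace Stmt1Aux

def kd {n : ℕ} (i j : Fin n) : ℝ := if i = j then 1 else 0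

lemma sum_kd_mul {n : ℕ} (f : Fin n → ℝ) (j : Fin n) : ∑ k, kd j k * f k = f j := by
  simp [kd]

lemma sum_mul_kd {n : ℕ} (f : Fin n → ℝ) (j : Fin n) : ∑ k, f k * kd j k = f j := by
  simp [kd]

lemma sum_kd_kd {n : ℕ} (i j : Fin n) : ∑ k, kd i k * kd j k = kd i j := by
  simp [kd, ite_and]

lemma sum_kd {n : ℕ} (j : Fin n) : ∑ k, kd j k = 1 := by simp [kd]

lemma kd_comm {n : ℕ} (i j : Fin n) : kd i j = kd j i := by
  simp [kd, eq_comm]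

lemma kd_diag {n : ℕ} (i : Fin n) : kd i i = 1 := by simp [kd]

/-- Pointwise collapse of the k-sum of the squared D-tensor. -/
lemma coordD2k {n : ℕ} (R : Fin n → Fin n → ℝ) (p α : Fin n → ℝ) (b : ℝ) (i j : Fin n) :
    ∑ k, (α i * kd j k - α j * kd i k + b * (p i * R j k - p j * R i k))^2
      = (α i)^2 + (α j)^2 - 2*(α i*α j)*kd i j
        + b^2*(p i)^2*(∑ k, (R j k)^2) + b^2*(p j)^2*(∑ k, (R i k)^2)
        - 2*b^2*(p i*p j)*(∑ k, R i k * R j k)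
        + 2*b*(α i*p i)*R j j + 2*b*(α j*p j)*R i i
        - 2*b*(α i*p j)*R i j - 2*b*(α j*p i)*R j i := by
  have h : ∀ k, (α i * kd j k - α j * kd i k + b * (p i * R j k - p j * R i k))^2
      = (α i)^2 * kd j k + (α j)^2 * kd i k - 2*(α i*α j)*(kd i k * kd j k)
        + b^2*(p i)^2*(R j k)^2 + b^2*(p j)^2*(R i k)^2
        - 2*b^2*(p i*p j)*(R i k * R j k)
        + 2*b*(α i*p i)*(kd j k * R j k) + 2*b*(α j*p j)*(kd i k * R i k)
        - 2*b*(α i*p j)*(kd j k * R i k) - 2*b*(α j*p i)*(kd i k * R j k) := by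
    intro k; unfold kd; split_ifs <;> ring
  rw [Finset.sum_congr rfl (fun k _ => h k)]
  simp only [Finset.sum_add_distrib, Finset.sum_sub_distrib, ← Finset.mul_sum,
    sum_kd_mul, sum_kd, sum_kd_kd, mul_one]
  rw [kd_comm j i]

/-- Full evaluation of `∑ |D|²` in coordinates. -/
lemma coordD2 {n : ℕ} (R : Fin n → Fin n → ℝ) (hR : ∀ i j, R i j = R j i)
    (p α w : Fin n → ℝ) (hw : ∀ i, w i = ∑ j, R i j * p j) (b : ℝ) :
    ∑ i, ∑ j, ∑ k, (α i * kd j k - α j * kd i k + b * (p i * R j k - p j * R i k))^2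
      = 2*((n:ℝ)-1)*(∑ i, (α i)^2)
        + 2*b^2*(∑ i, (p i)^2)*(∑ i, ∑ j, (R i j)^2)
        - 2*b^2*(∑ i, (w i)^2)
        + 4*b*(∑ i, α i * p i)*(∑ i, R i i)
        - 4*b*(∑ i, α i * w i) := by
  have hwk : ∀ k, ∑ i, R i k * p i = w k := by
    intro k
    rw [hw k]
    exact Finset.sum_congr rfl fun i _ => by rw [hR]
  rw [Finset.sum_congr rfl (fun i _ => Finset.sum_congr rfl (fun j _ => coordD2k R p α b i j))]
  have H1 : (∑ i : Fin n, ∑ j : Fin n, (α i)^2) = (n:ℝ) * ∑ i, (α i)^2 := by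
    simp [Finset.sum_const, Finset.card_univ, Finset.mul_sum, mul_comm]
  have H2 : (∑ i : Fin n, ∑ j : Fin n, (α j)^2) = (n:ℝ) * ∑ i, (α i)^2 := by
    rw [Finset.sum_comm]; exact H1
  have H3 : (∑ i : Fin n, ∑ j : Fin n, 2*(α i*α j)*kd i j) = 2 * ∑ i, (α i)^2 := by
    rw [Finset.sum_congr rfl (fun i _ => sum_mul_kd (fun j => 2*(α i*α j)) i)]
    rw [Finset.mul_sum]
    exact Finset.sum_congr rfl fun i _ => by ring
  have H4 : (∑ i : Fin n, ∑ j : Fin n, b^2*(p i)^2*(∑ k, (R j k)^2))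
      = b^2*(∑ i, (p i)^2)*(∑ i, ∑ j, (R i j)^2) := by
    simp only [← Finset.mul_sum]
    rw [← Finset.sum_mul, ← Finset.mul_sum]
  have H5 : (∑ i : Fin n, ∑ j : Fin n, b^2*(p j)^2*(∑ k, (R i k)^2))
      = b^2*(∑ i, (p i)^2)*(∑ i, ∑ j, (R i j)^2) := by
    rw [Finset.sum_comm]
    simp only [← Finset.mul_sum]
    rw [← Finset.sum_mul, ← Finset.mul_sum]
  have H6 : (∑ i : Fin n, ∑ j : Fin n, 2*b^2*(p i*p j)*(∑ k, R i k * R j k))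
      = 2*b^2*(∑ i, (w i)^2) := by
    have e1 : ∀ i j : Fin n, 2*b^2*(p i*p j)*(∑ k, R i k * R j k)
        = ∑ k, 2*b^2*((R i k*p i)*(R j k*p j)) := by
      intro i j; rw [Finset.mul_sum]
      exact Finset.sum_congr rfl fun k _ => by ring
    rw [Finset.sum_congr rfl fun i _ => Finset.sum_congr rfl fun j _ => e1 i j]
    rw [Finset.sum_congr rfl fun i (_ : i ∈ Finset.univ) => Finset.sum_comm]
    rw [Finset.sum_comm]
    have e2 : ∀ k, (∑ i : Fin n, ∑ j : Fin n, 2*b^2*((R i k*p i)*(R j k*p j)))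
        = 2*b^2*((w k)^2) := by
      intro k
      simp only [← Finset.mul_sum]
      rw [← Finset.sum_mul, hwk k]
      ring
    rw [Finset.sum_congr rfl fun k _ => e2 k]
    rw [← Finset.mul_sum]
  have H7 : (∑ i : Fin n, ∑ j : Fin n, 2*b*(α i*p i)*R j j)
      = 2*b*(∑ i, α i * p i)*(∑ i, R i i) := by
    simp only [← Finset.mul_sum]
    rw [← Finset.sum_mul]
    rw [show (∑ i, 2*b*(α i*p i)) = 2*b*(∑ i, α i * p i) by rw [Finset.mul_sum]]
  have H8 : (∑ i : Fin n, ∑ j : Fin n, 2*b*(α j*p j)*R i i)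
      = 2*b*(∑ i, α i * p i)*(∑ i, R i i) := by
    rw [Finset.sum_comm]
    simp only [← Finset.mul_sum]
    rw [← Finset.sum_mul]
    rw [show (∑ i, 2*b*(α i*p i)) = 2*b*(∑ i, α i * p i) by rw [Finset.mul_sum]]
  have H9 : (∑ i : Fin n, ∑ j : Fin n, 2*b*(α i*p j)*R i j) = 2*b*(∑ i, α i * w i) := by
    have e1 : ∀ i : Fin n, (∑ j : Fin n, 2*b*(α i*p j)*R i j) = 2*b*(α i * w i) := by
      intro i
      rw [Finset.sum_congr rfl fun j (_ : j ∈ Finset.univ) =>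
        show 2*b*(α i*p j)*R i j = 2*b*α i*(R i j * p j) by ring]
      rw [← Finset.mul_sum, hw i]
      ring
    rw [Finset.sum_congr rfl fun i _ => e1 i, ← Finset.mul_sum]
  have H10 : (∑ i : Fin n, ∑ j : Fin n, 2*b*(α j*p i)*R j i) = 2*b*(∑ i, α i * w i) := by
    rw [Finset.sum_comm]
    have e1 : ∀ j : Fin n, (∑ i : Fin n, 2*b*(α j*p i)*R j i) = 2*b*(α j * w j) := by
      intro j
      rw [Finset.sum_congr rfl fun i (_ : i ∈ Finset.univ) =>
        show 2*b*(α j*p i)*R j i = 2*b*α j*(R j i * p i) by ring]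
      rw [← Finset.mul_sum, hw j]
      ring
    rw [Finset.sum_congr rfl fun j _ => e1 j, ← Finset.mul_sum]
  simp only [Finset.sum_add_distrib, Finset.sum_sub_distrib]
  rw [H1, H2, H3, H4, H5, H6, H7, H8, H9, H10]
  ring

/-- Contraction of D(eᵢ, v, eⱼ) with Ric. -/
lemma coordC1 {n : ℕ} (R : Fin n → Fin n → ℝ) (hR : ∀ i j, R i j = R j i)
    (p w : Fin n → ℝ) (hw : ∀ i, w i = ∑ j, R i j * p j)
    (a b c q s nv : ℝ) (hq : q = ∑ i, w i * p i) (hs : s = ∑ i, R i i) :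
    ∑ i, ∑ j, (a*(w i*p j - q*kd i j) + b*(w j*p i - R i j*nv)
        - c*(p i*p j - nv*kd i j)) * R i j
      = (a+b)*(∑ i, (w i)^2) - (a*s+c)*q - b*nv*(∑ i, ∑ j, (R i j)^2) + c*nv*s := by
  have hwk : ∀ k, ∑ i, R i k * p i = w k := by
    intro k; rw [hw k]; exact Finset.sum_congr rfl fun i _ => by rw [hR]
  have hpt : ∀ i j : Fin n, (a*(w i*p j - q*kd i j) + b*(w j*p i - R i j*nv)
        - c*(p i*p j - nv*kd i j)) * R i j
      = (a*w i)*(R i j*p j) - a*q*(kd i j * R i j) + b*(p i*(w j * R i j))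
        - b*nv*((R i j)^2) - (c*p i)*(R i j*p j) + c*nv*(kd i j * R i j) := by
    intro i j; ring
  rw [Finset.sum_congr rfl fun i _ => Finset.sum_congr rfl fun j _ => hpt i j]
  simp only [Finset.sum_add_distrib, Finset.sum_sub_distrib]
  have M1 : (∑ i : Fin n, ∑ j : Fin n, (a*w i)*(R i j*p j)) = a * ∑ i, (w i)^2 := by
    have e1 : ∀ i : Fin n, (∑ j : Fin n, (a*w i)*(R i j*p j)) = a*((w i)^2) := by
      intro i; rw [← Finset.mul_sum, ← hw i]; ring
    rw [Finset.sum_congr rfl fun i _ => e1 i, ← Finset.mul_sum]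
  have M2 : (∑ i : Fin n, ∑ j : Fin n, a*q*(kd i j * R i j)) = a*q*s := by
    have e1 : ∀ i : Fin n, (∑ j : Fin n, a*q*(kd i j * R i j)) = a*q*(R i i) := by
      intro i; rw [← Finset.mul_sum, sum_kd_mul (R i) i]
    rw [Finset.sum_congr rfl fun i _ => e1 i, ← Finset.mul_sum, ← hs]
  have M3 : (∑ i : Fin n, ∑ j : Fin n, b*(p i*(w j * R i j))) = b * ∑ i, (w i)^2 := by
    rw [Finset.sum_comm]
    have e1 : ∀ j : Fin n, (∑ i : Fin n, b*(p i*(w j * R i j))) = b*((w j)^2) := by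
      intro j
      rw [Finset.sum_congr rfl fun i (_ : i ∈ Finset.univ) =>
        show b*(p i*(w j * R i j)) = (b*w j)*(R i j * p i) by ring]
      rw [← Finset.mul_sum, hwk j]; ring
    rw [Finset.sum_congr rfl fun j _ => e1 j, ← Finset.mul_sum]
  have M4 : (∑ i : Fin n, ∑ j : Fin n, b*nv*((R i j)^2))
      = b*nv*(∑ i, ∑ j, (R i j)^2) := by
    simp only [← Finset.mul_sum]
  have M5 : (∑ i : Fin n, ∑ j : Fin n, (c*p i)*(R i j*p j)) = c*q := by
    have e1 : ∀ i : Fin n, (∑ j : Fin n, (c*p i)*(R i j*p j)) = c*(w i * p i) := by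
      intro i; rw [← Finset.mul_sum, ← hw i]; ring
    rw [Finset.sum_congr rfl fun i _ => e1 i, ← Finset.mul_sum, ← hq]
  have M6 : (∑ i : Fin n, ∑ j : Fin n, c*nv*(kd i j * R i j)) = c*nv*s := by
    have e1 : ∀ i : Fin n, (∑ j : Fin n, c*nv*(kd i j * R i j)) = c*nv*(R i i) := by
      intro i; rw [← Finset.mul_sum, sum_kd_mul (R i) i]
    rw [Finset.sum_congr rfl fun i _ => e1 i, ← Finset.mul_sum, ← hs]
  rw [M1, M2, M3, M4, M5, M6]
  ring

/-- Contraction of D(eᵢ, v, eⱼ) with v⊗v vanishes. -/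
lemma coordC2 {n : ℕ} (R : Fin n → Fin n → ℝ)
    (p w : Fin n → ℝ) (hw : ∀ i, w i = ∑ j, R i j * p j)
    (a b c q nv : ℝ) (hq : q = ∑ i, w i * p i) (hnv : nv = ∑ i, (p i)^2) :
    ∑ i, ∑ j, (a*(w i*p j - q*kd i j) + b*(w j*p i - R i j*nv)
        - c*(p i*p j - nv*kd i j)) * (p i * p j) = 0 := by
  have hpt : ∀ i j : Fin n, (a*(w i*p j - q*kd i j) + b*(w j*p i - R i j*nv)
        - c*(p i*p j - nv*kd i j)) * (p i * p j)
      = (a*(w i*p i))*((p j)^2) - a*q*(kd i j * (p i*p j))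
        + (b*((p i)^2))*(w j*p j) - (b*nv*p i)*(R i j*p j)
        - (c*((p i)^2))*((p j)^2) + c*nv*(kd i j * (p i*p j)) := by
    intro i j; ring
  rw [Finset.sum_congr rfl fun i _ => Finset.sum_congr rfl fun j _ => hpt i j]
  simp only [Finset.sum_add_distrib, Finset.sum_sub_distrib]
  have N1 : (∑ i : Fin n, ∑ j : Fin n, (a*(w i*p i))*((p j)^2)) = a*q*nv := by
    have e1 : ∀ i : Fin n, (∑ j : Fin n, (a*(w i*p i))*((p j)^2))
        = a*(w i*p i)*nv := by
      intro i; rw [← Finset.mul_sum, ← hnv]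
    rw [Finset.sum_congr rfl fun i _ => e1 i, ← Finset.sum_mul, ← Finset.mul_sum,
      ← hq]
  have N2 : (∑ i : Fin n, ∑ j : Fin n, a*q*(kd i j * (p i*p j))) = a*q*nv := by
    have e1 : ∀ i : Fin n, (∑ j : Fin n, a*q*(kd i j * (p i*p j)))
        = a*q*((p i)^2) := by
      intro i
      rw [← Finset.mul_sum, sum_kd_mul (fun j => p i * p j) i]; ring
    rw [Finset.sum_congr rfl fun i _ => e1 i, ← Finset.mul_sum, ← hnv]
  have N3 : (∑ i : Fin n, ∑ j : Fin n, (b*((p i)^2))*(w j*p j)) = b*nv*q := by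
    have e1 : ∀ i : Fin n, (∑ j : Fin n, (b*((p i)^2))*(w j*p j))
        = b*((p i)^2)*q := by
      intro i; rw [← Finset.mul_sum, ← hq]
    rw [Finset.sum_congr rfl fun i _ => e1 i, ← Finset.sum_mul, ← Finset.mul_sum,
      ← hnv]
  have N4 : (∑ i : Fin n, ∑ j : Fin n, (b*nv*p i)*(R i j*p j)) = b*nv*q := by
    have e1 : ∀ i : Fin n, (∑ j : Fin n, (b*nv*p i)*(R i j*p j))
        = b*nv*(w i * p i) := by
      intro i; rw [← Finset.mul_sum, ← hw i]; ring
    rw [Finset.sum_congr rfl fun i _ => e1 i, ← Finset.mul_sum, ← hq]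
  have N5 : (∑ i : Fin n, ∑ j : Fin n, (c*((p i)^2))*((p j)^2)) = c*nv*nv := by
    have e1 : ∀ i : Fin n, (∑ j : Fin n, (c*((p i)^2))*((p j)^2))
        = c*((p i)^2)*nv := by
      intro i; rw [← Finset.mul_sum, ← hnv]
    rw [Finset.sum_congr rfl fun i _ => e1 i, ← Finset.sum_mul, ← Finset.mul_sum,
      ← hnv]
  have N6 : (∑ i : Fin n, ∑ j : Fin n, c*nv*(kd i j * (p i*p j))) = c*nv*nv := by
    have e1 : ∀ i : Fin n, (∑ j : Fin n, c*nv*(kd i j * (p i*p j)))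
        = c*nv*((p i)^2) := by
      intro i
      rw [← Finset.mul_sum, sum_kd_mul (fun j => p i * p j) i]; ring
    rw [Finset.sum_congr rfl fun i _ => e1 i, ← Finset.mul_sum, ← hnv]
  rw [N1, N2, N3, N4, N5, N6]
  ring

/-- Contraction of D(eᵢ, v, eⱼ) with the metric. -/
lemma coordC3 {n : ℕ} (R : Fin n → Fin n → ℝ)
    (p w : Fin n → ℝ)
    (a b c q s nv : ℝ) (hq : q = ∑ i, w i * p i) (hs : s = ∑ i, R i i)
    (hnv : nv = ∑ i, (p i)^2) :
    ∑ i, ∑ j, (a*(w i*p j - q*kd i j) + b*(w j*p i - R i j*nv)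
        - c*(p i*p j - nv*kd i j)) * kd i j
      = a*(q - (n:ℝ)*q) + b*(q - s*nv) - c*(nv - (n:ℝ)*nv) := by
  rw [Finset.sum_congr rfl fun i (_ : i ∈ Finset.univ) =>
    sum_mul_kd (fun j => a*(w i*p j - q*kd i j) + b*(w j*p i - R i j*nv)
      - c*(p i*p j - nv*kd i j)) i]
  have hpt : ∀ i : Fin n, a*(w i*p i - q*kd i i) + b*(w i*p i - R i i*nv)
      - c*(p i*p i - nv*kd i i)
      = a*(w i*p i) - a*q + b*(w i*p i) - b*nv*(R i i) - c*((p i)^2) + c*nv := by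
    intro i; rw [kd_diag]; ring
  rw [Finset.sum_congr rfl fun i _ => hpt i]
  simp only [Finset.sum_add_distrib, Finset.sum_sub_distrib]
  rw [show (∑ _i : Fin n, a*q) = (n:ℝ)*(a*q) by
    simp [Finset.sum_const, Finset.card_univ]]
  rw [show (∑ _i : Fin n, c*nv) = (n:ℝ)*(c*nv) by
    simp [Finset.sum_const, Finset.card_univ]]
  simp only [← Finset.mul_sum]
  rw [← hq, ← hs, ← hnv]
  ring

end Stmt1Aux

set_option maxHeartbeats 1600000 in
open Stmt1Aux in
/-- Contracting the D-tensor against `Ric - (1/m) v♭ ⊗ v♭ - λ g` in the first and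
third slots, with `v` in the second slot, gives `-((n-2)/2) |D|²`; in particular the
contraction is nonpositive and vanishes iff `D = 0`. -/
theorem stmt_1 (n : ℕ) (hn : 3 ≤ n) (m lam : ℝ) (hm : m ≠ 0)
    (e : OrthonormalBasis (Fin n) ℝ (EuclideanSpace ℝ (Fin n)))
    (Ric : EuclideanSpace ℝ (Fin n) →ₗ[ℝ] EuclideanSpace ℝ (Fin n) →ₗ[ℝ] ℝ)
    (hRicSymm : ∀ X Y, Ric X Y = Ric Y X)
    (v : EuclideanSpace ℝ (Fin n))
    (D : EuclideanSpace ℝ (Fin n) → EuclideanSpace ℝ (Fin n) →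
      EuclideanSpace ℝ (Fin n) → ℝ)
    (hD : ∀ X Y Z, D X Y Z =
      (1 / (((n : ℝ) - 1) * ((n : ℝ) - 2))) *
        (Ric X v * ⟪Y, Z⟫_ℝ - Ric Y v * ⟪X, Z⟫_ℝ)
      + (1 / ((n : ℝ) - 2)) * (Ric Y Z * ⟪X, v⟫_ℝ - Ric X Z * ⟪Y, v⟫_ℝ)
      - ((∑ i, Ric (e i) (e i)) / (((n : ℝ) - 1) * ((n : ℝ) - 2))) *
          (⟪X, v⟫_ℝ * ⟪Y, Z⟫_ℝ - ⟪Y, v⟫_ℝ * ⟪X, Z⟫_ℝ)) :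
    (∑ i, ∑ j, D (e i) v (e j) *
        (Ric (e i) (e j) - (1 / m) * ⟪v, e i⟫_ℝ * ⟪v, e j⟫_ℝ - lam * ⟪e i, e j⟫_ℝ)
      = -(((n : ℝ) - 2) / 2) * ∑ i, ∑ j, ∑ k, (D (e i) (e j) (e k)) ^ 2) ∧
    (∑ i, ∑ j, D (e i) v (e j) *
        (Ric (e i) (e j) - (1 / m) * ⟪v, e i⟫_ℝ * ⟪v, e j⟫_ℝ - lam * ⟪e i, e j⟫_ℝ)
      ≤ 0) ∧
    ((∑ i, ∑ j, D (e i) v (e j) *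
        (Ric (e i) (e j) - (1 / m) * ⟪v, e i⟫_ℝ * ⟪v, e j⟫_ℝ - lam * ⟪e i, e j⟫_ℝ)
      = 0) ↔ ∀ X Y Z, D X Y Z = 0) := by
  classical
  have h3 : (3:ℝ) ≤ (n:ℝ) := by exact_mod_cast hn
  have hn1 : ((n:ℝ) - 1) ≠ 0 := by intro h; linarith
  have hn2 : ((n:ℝ) - 2) ≠ 0 := by intro h; linarith
  set R : Fin n → Fin n → ℝ := fun i j => Ric (e i) (e j) with hRdef
  set p : Fin n → ℝ := fun i => ⟪v, e i⟫_ℝ with hpdef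
  set w : Fin n → ℝ := fun i => ∑ j, R i j * p j with hwdef
  have hw : ∀ i, w i = ∑ j, R i j * p j := fun i => by rw [hwdef]
  set s : ℝ := ∑ i, Ric (e i) (e i) with hsdef0
  set a : ℝ := 1/(((n:ℝ)-1)*((n:ℝ)-2)) with hadef
  set b : ℝ := 1/((n:ℝ)-2) with hbdef
  set c : ℝ := s/(((n:ℝ)-1)*((n:ℝ)-2)) with hcdef
  set α : Fin n → ℝ := fun i => a * w i - c * p i with hαdef
  have hα : ∀ i, α i = a * w i - c * p i := fun i => by rw [hαdef]
  have hRc : ∀ i j, Ric (e i) (e j) = R i j := fun i j => by rw [hRdef]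
  have hpv : ∀ i, ⟪v, e i⟫_ℝ = p i := fun i => by rw [hpdef]
  have hpi : ∀ i, ⟪e i, v⟫_ℝ = p i := fun i => by rw [real_inner_comm, hpv i]
  have hs : s = ∑ i, R i i := by rw [hsdef0]
  have hRsym : ∀ i j, R i j = R j i := fun i j => by
    rw [← hRc i j, ← hRc j i]; exact hRicSymm _ _
  have hkd : ∀ i j, ⟪e i, e j⟫_ℝ = kd i j := by
    intro i j
    rw [orthonormal_iff_ite.mp e.orthonormal i j]
    simp [kd]
  have hrepr : ∀ X : EuclideanSpace ℝ (Fin n), ∑ i, ⟪X, e i⟫_ℝ • e i = X := by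
    intro X
    have h := e.sum_repr' X
    rw [Finset.sum_congr rfl fun i (_ : i ∈ Finset.univ) =>
      show ⟪X, e i⟫_ℝ • e i = ⟪e i, X⟫_ℝ • e i by rw [real_inner_comm]]
    exact h
  have EA : ∀ X W : EuclideanSpace ℝ (Fin n),
      ∑ i, ⟪X, e i⟫_ℝ * ⟪e i, W⟫_ℝ = ⟪X, W⟫_ℝ := by
    intro X W
    calc ∑ i, ⟪X, e i⟫_ℝ * ⟪e i, W⟫_ℝ
        = ∑ i, ⟪(⟪X, e i⟫_ℝ) • e i, W⟫_ℝ :=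
          Finset.sum_congr rfl fun i _ => (real_inner_smul_left _ _ _).symm
      _ = ⟪∑ i, (⟪X, e i⟫_ℝ) • e i, W⟫_ℝ := (sum_inner _ _ _).symm
      _ = ⟪X, W⟫_ℝ := by rw [hrepr X]
  have EB : ∀ X W : EuclideanSpace ℝ (Fin n),
      ∑ i, ⟪X, e i⟫_ℝ * Ric (e i) W = Ric X W := by
    intro X W
    calc ∑ i, ⟪X, e i⟫_ℝ * Ric (e i) W
        = ∑ i, Ric ((⟪X, e i⟫_ℝ) • e i) W := by
          refine Finset.sum_congr rfl fun i _ => ?_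
          rw [map_smul, LinearMap.smul_apply, smul_eq_mul]
      _ = Ric (∑ i, (⟪X, e i⟫_ℝ) • e i) W := by
          rw [map_sum, LinearMap.sum_apply]
      _ = Ric X W := by rw [hrepr X]
  have EC : ∀ X W : EuclideanSpace ℝ (Fin n),
      ∑ i, ⟪X, e i⟫_ℝ * Ric W (e i) = Ric W X := by
    intro X W
    calc ∑ i, ⟪X, e i⟫_ℝ * Ric W (e i)
        = ∑ i, Ric W ((⟪X, e i⟫_ℝ) • e i) := by
          refine Finset.sum_congr rfl fun i _ => ?_
          rw [map_smul, smul_eq_mul]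
      _ = Ric W (∑ i, (⟪X, e i⟫_ℝ) • e i) := by rw [map_sum]
      _ = Ric W X := by rw [hrepr X]
  have hwv : ∀ i, Ric (e i) v = w i := by
    intro i
    rw [hw i, ← EC v (e i)]
    exact Finset.sum_congr rfl fun j _ => by rw [hpv j, hRc i j]; ring
  set q : ℝ := ∑ i, w i * p i with hqdef
  have hqv : Ric v v = q := by
    rw [hqdef, ← EB v v]
    exact Finset.sum_congr rfl fun i _ => by rw [hpv i, hwv i]; ring
  set nv : ℝ := ∑ i, (p i)^2 with hnvdef
  have hnvv : ⟪v, v⟫_ℝ = nv := by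
    rw [hnvdef, ← EA v v]
    exact Finset.sum_congr rfl fun i _ => by
      rw [hpv i, hpi i]; ring
  have hDc : ∀ i j k, D (e i) (e j) (e k)
      = α i * kd j k - α j * kd i k + b * (p i * R j k - p j * R i k) := by
    intro i j k
    rw [hD (e i) (e j) (e k), hwv i, hwv j, hkd j k, hkd i k, hRc j k, hRc i k,
      hpi i, hpi j, hα i, hα j]
    ring
  have hDm : ∀ i j, D (e i) v (e j)
      = a*(w i*p j - q*kd i j) + b*(w j*p i - R i j*nv)
        - c*(p i*p j - nv*kd i j) := by
    intro i j
    have hvr : Ric v (e j) = w j := by rw [hRicSymm v (e j), hwv j]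
    rw [hD (e i) v (e j), hwv i, hqv, hkd i j, hvr, hpi i, hRc i j, hnvv, hpv j]
  set P : ℝ := ∑ i, (w i)^2 with hPdef
  set RN : ℝ := ∑ i, ∑ j, (R i j)^2 with hRNdef
  have key2 : (∑ i, ∑ j, ∑ k, (D (e i) (e j) (e k))^2)
      = 2*((n:ℝ)-1)*(∑ i, (α i)^2) + 2*b^2*nv*RN - 2*b^2*P
        + 4*b*(∑ i, α i * p i)*s - 4*b*(∑ i, α i * w i) := by
    rw [Finset.sum_congr rfl fun i (_ : i ∈ Finset.univ) =>
      Finset.sum_congr rfl fun j (_ : j ∈ Finset.univ) =>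
      Finset.sum_congr rfl fun k (_ : k ∈ Finset.univ) => by rw [hDc i j k]]
    rw [coordD2 R hRsym p α w hw b, ← hnvdef, ← hPdef, ← hRNdef, ← hs]
  have key1 : (∑ i, ∑ j, D (e i) v (e j) *
        (Ric (e i) (e j) - (1 / m) * ⟪v, e i⟫_ℝ * ⟪v, e j⟫_ℝ - lam * ⟪e i, e j⟫_ℝ))
      = ((a+b)*P - (a*s+c)*q - b*nv*RN + c*nv*s)
        - lam*(a*(q - (n:ℝ)*q) + b*(q - s*nv) - c*(nv - (n:ℝ)*nv)) := by
    have hpt : ∀ i j, D (e i) v (e j) *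
        (Ric (e i) (e j) - (1 / m) * ⟪v, e i⟫_ℝ * ⟪v, e j⟫_ℝ - lam * ⟪e i, e j⟫_ℝ)
      = (a*(w i*p j - q*kd i j) + b*(w j*p i - R i j*nv)
          - c*(p i*p j - nv*kd i j)) * R i j
        - (1/m) * ((a*(w i*p j - q*kd i j) + b*(w j*p i - R i j*nv)
          - c*(p i*p j - nv*kd i j)) * (p i * p j))
        - lam * ((a*(w i*p j - q*kd i j) + b*(w j*p i - R i j*nv)
          - c*(p i*p j - nv*kd i j)) * kd i j) := by
      intro i j
      rw [hDm i j, hRc i j, hpv i, hpv j, hkd i j]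
      ring
    rw [Finset.sum_congr rfl fun i (_ : i ∈ Finset.univ) =>
      Finset.sum_congr rfl fun j (_ : j ∈ Finset.univ) => hpt i j]
    simp only [Finset.sum_sub_distrib, ← Finset.mul_sum]
    rw [coordC1 R hRsym p w hw a b c q s nv hqdef hs,
        coordC2 R p w hw a b c q nv hqdef hnvdef,
        coordC3 R p w a b c q s nv hqdef hs hnvdef,
        ← hPdef, ← hRNdef]
    ring
  have hA1 : (∑ i, (α i)^2) = a^2*P - 2*(a*c)*q + c^2*nv := by
    rw [Finset.sum_congr rfl fun i (_ : i ∈ Finset.univ) =>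
      show (α i)^2 = a^2*((w i)^2) - 2*(a*c)*(w i*p i) + c^2*((p i)^2) by
        rw [hα i]; ring]
    simp only [Finset.sum_add_distrib, Finset.sum_sub_distrib, ← Finset.mul_sum]
    rfl
  have hA2 : (∑ i, α i * p i) = a*q - c*nv := by
    rw [Finset.sum_congr rfl fun i (_ : i ∈ Finset.univ) =>
      show α i * p i = a*(w i*p i) - c*((p i)^2) by rw [hα i]; ring]
    simp only [Finset.sum_sub_distrib, ← Finset.mul_sum]
    rfl
  have hA3 : (∑ i, α i * w i) = a*P - c*q := by
    rw [Finset.sum_congr rfl fun i (_ : i ∈ Finset.univ) =>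
      show α i * w i = a*((w i)^2) - c*(w i*p i) by rw [hα i]; ring]
    simp only [Finset.sum_sub_distrib, ← Finset.mul_sum]
    rfl
  have main : (∑ i, ∑ j, D (e i) v (e j) *
        (Ric (e i) (e j) - (1 / m) * ⟪v, e i⟫_ℝ * ⟪v, e j⟫_ℝ - lam * ⟪e i, e j⟫_ℝ))
      = -(((n : ℝ) - 2) / 2) * ∑ i, ∑ j, ∑ k, (D (e i) (e j) (e k)) ^ 2 := by
    rw [key1, key2, hA1, hA2, hA3, hadef, hbdef, hcdef]
    field_simp
    ring
  refine ⟨main, ?_, ?_⟩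
  · rw [main, neg_mul]
    have hS : (0:ℝ) ≤ ∑ i, ∑ j, ∑ k, (D (e i) (e j) (e k)) ^ 2 :=
      Finset.sum_nonneg fun i _ => Finset.sum_nonneg fun j _ =>
        Finset.sum_nonneg fun k _ => sq_nonneg _
    have hc2 : (0:ℝ) ≤ ((n:ℝ)-2)/2 := by linarith
    exact neg_nonpos.mpr (mul_nonneg hc2 hS)
  · constructor
    · intro h0
      rw [main] at h0
      have hS0 : (∑ i, ∑ j, ∑ k, (D (e i) (e j) (e k)) ^ 2) = 0 := by
        rcases mul_eq_zero.mp h0 with h | h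
        · exfalso
          have : ((n:ℝ)-2)/2 = 0 := by linarith [neg_eq_zero.mp h]
          have : (n:ℝ) = 2 := by linarith
          linarith
        · exact h
      have hz : ∀ i j k, D (e i) (e j) (e k) = 0 := by
        intro i j k
        have e1 := (Finset.sum_eq_zero_iff_of_nonneg (fun i _ =>
          Finset.sum_nonneg fun j _ => Finset.sum_nonneg fun k _ =>
            sq_nonneg (D (e i) (e j) (e k)))).mp hS0 i (Finset.mem_univ i)
        have e2 := (Finset.sum_eq_zero_iff_of_nonneg (fun j _ =>
          Finset.sum_nonneg fun k _ => sq_nonneg (D (e i) (e j) (e k)))).mp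
            e1 j (Finset.mem_univ j)
        have e3 := (Finset.sum_eq_zero_iff_of_nonneg (fun k _ =>
          sq_nonneg (D (e i) (e j) (e k)))).mp e2 k (Finset.mem_univ k)
        exact pow_eq_zero_iff (by norm_num : (2:ℕ) ≠ 0) |>.mp e3
      -- trilinearity from the formula
      intro X Y Z
      have lin1 : ∀ X Y Z : EuclideanSpace ℝ (Fin n),
          D X Y Z = ∑ i, ⟪X, e i⟫_ℝ * D (e i) Y Z := by
        intro X Y Z
        have hterm : ∀ i, ⟪X, e i⟫_ℝ * D (e i) Y Z
            = (a*⟪Y, Z⟫_ℝ)*(⟪X, e i⟫_ℝ * Ric (e i) v)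
              + (c*⟪Y, v⟫_ℝ - a*Ric Y v)*(⟪X, e i⟫_ℝ * ⟪e i, Z⟫_ℝ)
              + (b*Ric Y Z - c*⟪Y, Z⟫_ℝ)*(⟪X, e i⟫_ℝ * ⟪e i, v⟫_ℝ)
              - (b*⟪Y, v⟫_ℝ)*(⟪X, e i⟫_ℝ * Ric (e i) Z) := by
          intro i; rw [hD (e i) Y Z]; ring
        rw [Finset.sum_congr rfl fun i (_ : i ∈ Finset.univ) => hterm i]
        simp only [Finset.sum_add_distrib, Finset.sum_sub_distrib, ← Finset.mul_sum]
        rw [EB X v, EA X Z, EA X v, EB X Z, hD X Y Z]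
        ring
      have lin2 : ∀ X Y Z : EuclideanSpace ℝ (Fin n),
          D X Y Z = ∑ j, ⟪Y, e j⟫_ℝ * D X (e j) Z := by
        intro X Y Z
        have hterm : ∀ j, ⟪Y, e j⟫_ℝ * D X (e j) Z
            = (a*Ric X v - c*⟪X, v⟫_ℝ)*(⟪Y, e j⟫_ℝ * ⟪e j, Z⟫_ℝ)
              - (a*⟪X, Z⟫_ℝ)*(⟪Y, e j⟫_ℝ * Ric (e j) v)
              + (b*⟪X, v⟫_ℝ)*(⟪Y, e j⟫_ℝ * Ric (e j) Z)
              + (c*⟪X, Z⟫_ℝ - b*Ric X Z)*(⟪Y, e j⟫_ℝ * ⟪e j, v⟫_ℝ) := by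
          intro j; rw [hD X (e j) Z]; ring
        rw [Finset.sum_congr rfl fun j (_ : j ∈ Finset.univ) => hterm j]
        simp only [Finset.sum_add_distrib, Finset.sum_sub_distrib, ← Finset.mul_sum]
        rw [EA Y Z, EB Y v, EB Y Z, EA Y v, hD X Y Z]
        ring
      have lin3 : ∀ X Y Z : EuclideanSpace ℝ (Fin n),
          D X Y Z = ∑ k, ⟪Z, e k⟫_ℝ * D X Y (e k) := by
        intro X Y Z
        have hterm : ∀ k, ⟪Z, e k⟫_ℝ * D X Y (e k)
            = (a*Ric X v - c*⟪X, v⟫_ℝ)*(⟪Z, e k⟫_ℝ * ⟪e k, Y⟫_ℝ)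
              + (c*⟪Y, v⟫_ℝ - a*Ric Y v)*(⟪Z, e k⟫_ℝ * ⟪e k, X⟫_ℝ)
              + (b*⟪X, v⟫_ℝ)*(⟪Z, e k⟫_ℝ * Ric Y (e k))
              - (b*⟪Y, v⟫_ℝ)*(⟪Z, e k⟫_ℝ * Ric X (e k)) := by
          intro k
          rw [hD X Y (e k), real_inner_comm Y (e k), real_inner_comm X (e k)]
          ring
        rw [Finset.sum_congr rfl fun k (_ : k ∈ Finset.univ) => hterm k]
        simp only [Finset.sum_add_distrib, Finset.sum_sub_distrib, ← Finset.mul_sum]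
        rw [EA Z Y, EA Z X, EC Z Y, EC Z X, hD X Y Z]
        rw [real_inner_comm Y Z, real_inner_comm X Z]
        ring
      have z1 : ∀ i, D (e i) Y Z = 0 := by
        intro i
        rw [lin2 (e i) Y Z]
        refine Finset.sum_eq_zero fun j _ => ?_
        have z2 : D (e i) (e j) Z = 0 := by
          rw [lin3 (e i) (e j) Z]
          exact Finset.sum_eq_zero fun k _ => by rw [hz i j k, mul_zero]
        rw [z2, mul_zero]
      rw [lin1 X Y Z]
      exact Finset.sum_eq_zero fun i _ => by rw [z1 i, mul_zero]
    · intro hall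
      refine Finset.sum_eq_zero fun i _ => Finset.sum_eq_zero fun j _ => ?_
      rw [hall, zero_mul]
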